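/- Let K be an algebraically closed field of characteristic 3 and Λ₂' the bound quiver algebra defined by the quiver with loop α at vertex 1, arrows β: 1 → 2, γ: 2 → 1 and relations α³ = γβ, βγ = 0, βα² = 0, α²γ = 0. Then the commutator subspace K(Λ₂') is spanned by {γ, β, αγ, βα, γβ, βαγ - αγβ}; in particular α³ = γβ ∈ K(Λ₂'). -/

import Mathlib

set_option maxHeartbeats 1600000 in
/-- The commutator subspace of the standard algebra `Λ₂'` (char 3) is spanned by
`{γ, β, αγ, βα, γβ, βαγ - αγβ}`; in particular `α³ = γβ ∈ K(Λ₂')`. -/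
theorem commutator_space_of_Lambda2'
    (K : Type*) [Field K] [IsAlgClosed K] [CharP K 3]
    (Λ : Type*) [Ring Λ] [Algebra K Λ]
    (e1 e2 α β γ : Λ)
    (he1 : e1 * e1 = e1) (he2 : e2 * e2 = e2)
    (h12 : e1 * e2 = 0) (h21 : e2 * e1 = 0) (hsum : e1 + e2 = 1)
    (hα1 : e1 * α = α) (hα2 : α * e1 = α)
    (hβ1 : e2 * β = β) (hβ2 : β * e1 = β)
    (hγ1 : e1 * γ = γ) (hγ2 : γ * e2 = γ)
    (r1 : α ^ 3 = γ * β) (r2 : β * γ = 0) (r3 : β * α ^ 2 = 0) (r4 : α ^ 2 * γ = 0)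
    (b : Module.Basis (Fin 11) K Λ)
    (hb0 : b 0 = e1) (hb1 : b 1 = α) (hb2 : b 2 = α ^ 2) (hb3 : b 3 = α ^ 3)
    (hb4 : b 4 = α ^ 4) (hb5 : b 5 = γ) (hb6 : b 6 = α * γ) (hb7 : b 7 = e2)
    (hb8 : b 8 = β) (hb9 : b 9 = β * α) (hb10 : b 10 = β * α * γ) :
    Submodule.span K {x : Λ | ∃ u v : Λ, x = u * v - v * u} =
      Submodule.span K {γ, β, α * γ, β * α, γ * β, β * α * γ - α * γ * β} ∧
    α ^ 3 ∈ Submodule.span K {x : Λ | ∃ u v : Λ, x = u * v - v * u} := by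
  -- derived binary rules
  have e2α : e2 * α = 0 := by rw [← hα1, ← mul_assoc, h21, zero_mul]
  have αe2 : α * e2 = 0 := by rw [← hα2, mul_assoc, h12, mul_zero]
  have γe1 : γ * e1 = 0 := by rw [← hγ2, mul_assoc, h21, mul_zero]
  have e2γ : e2 * γ = 0 := by rw [← hγ1, ← mul_assoc, h21, zero_mul]
  have βe2 : β * e2 = 0 := by rw [← hβ2, mul_assoc, h12, mul_zero]
  have e1β : e1 * β = 0 := by rw [← hβ1, ← mul_assoc, h12, zero_mul]
  have αβ : α * β = 0 := by rw [← hβ1, ← mul_assoc, αe2, zero_mul]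
  have γα : γ * α = 0 := by rw [← hα1, ← mul_assoc, γe1, zero_mul]
  have γγ : γ * γ = 0 := by nth_rewrite 2 [← hγ1]; rw [← mul_assoc, γe1, zero_mul]
  have ββ : β * β = 0 := by nth_rewrite 2 [← hβ1]; rw [← mul_assoc, βe2, zero_mul]
  -- relations in right-associated letter form
  have γβ : γ * β = α * (α * α) := by rw [← r1, pow_succ, pow_two, mul_assoc]
  have βαα : β * (α * α) = 0 := by rw [← pow_two]; exact r3
  have ααγ : α * (α * γ) = 0 := by rw [← mul_assoc, ← pow_two]; exact r4
  have a5 : α * (α * (α * (α * α))) = 0 := by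
    rw [← mul_assoc, ← γβ, ← pow_two, ← mul_assoc, r4, zero_mul]
  -- tail versions
  have he1' : ∀ x : Λ, e1 * (e1 * x) = e1 * x := fun x => by rw [← mul_assoc, he1]
  have he2' : ∀ x : Λ, e2 * (e2 * x) = e2 * x := fun x => by rw [← mul_assoc, he2]
  have h12' : ∀ x : Λ, e1 * (e2 * x) = 0 := fun x => by rw [← mul_assoc, h12, zero_mul]
  have h21' : ∀ x : Λ, e2 * (e1 * x) = 0 := fun x => by rw [← mul_assoc, h21, zero_mul]
  have hα1' : ∀ x : Λ, e1 * (α * x) = α * x := fun x => by rw [← mul_assoc, hα1]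
  have hα2' : ∀ x : Λ, α * (e1 * x) = α * x := fun x => by rw [← mul_assoc, hα2]
  have hβ1' : ∀ x : Λ, e2 * (β * x) = β * x := fun x => by rw [← mul_assoc, hβ1]
  have hβ2' : ∀ x : Λ, β * (e1 * x) = β * x := fun x => by rw [← mul_assoc, hβ2]
  have hγ1' : ∀ x : Λ, e1 * (γ * x) = γ * x := fun x => by rw [← mul_assoc, hγ1]
  have hγ2' : ∀ x : Λ, γ * (e2 * x) = γ * x := fun x => by rw [← mul_assoc, hγ2]
  have r2' : ∀ x : Λ, β * (γ * x) = 0 := fun x => by rw [← mul_assoc, r2, zero_mul]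
  have e2α' : ∀ x : Λ, e2 * (α * x) = 0 := fun x => by rw [← mul_assoc, e2α, zero_mul]
  have αe2' : ∀ x : Λ, α * (e2 * x) = 0 := fun x => by rw [← mul_assoc, αe2, zero_mul]
  have γe1' : ∀ x : Λ, γ * (e1 * x) = 0 := fun x => by rw [← mul_assoc, γe1, zero_mul]
  have e2γ' : ∀ x : Λ, e2 * (γ * x) = 0 := fun x => by rw [← mul_assoc, e2γ, zero_mul]
  have βe2' : ∀ x : Λ, β * (e2 * x) = 0 := fun x => by rw [← mul_assoc, βe2, zero_mul]
  have e1β' : ∀ x : Λ, e1 * (β * x) = 0 := fun x => by rw [← mul_assoc, e1β, zero_mul]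
  have αβ' : ∀ x : Λ, α * (β * x) = 0 := fun x => by rw [← mul_assoc, αβ, zero_mul]
  have γα' : ∀ x : Λ, γ * (α * x) = 0 := fun x => by rw [← mul_assoc, γα, zero_mul]
  have γγ' : ∀ x : Λ, γ * (γ * x) = 0 := fun x => by rw [← mul_assoc, γγ, zero_mul]
  have ββ' : ∀ x : Λ, β * (β * x) = 0 := fun x => by rw [← mul_assoc, ββ, zero_mul]
  have γβ' : ∀ x : Λ, γ * (β * x) = α * (α * (α * x)) := fun x => by
    rw [← mul_assoc, γβ, mul_assoc, mul_assoc]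
  have βαα' : ∀ x : Λ, β * (α * (α * x)) = 0 := fun x => by
    rw [← mul_assoc, ← mul_assoc, mul_assoc β α α, βαα, zero_mul]
  -- every element is in the span of the 11 basis vectors, written explicitly
  have m0 : e1 ∈ ({e1, α, α ^ 2, α ^ 3, α ^ 4, γ, α * γ, e2, β, β * α, β * α * γ} : Set Λ) := by simp
  have m1 : α ∈ ({e1, α, α ^ 2, α ^ 3, α ^ 4, γ, α * γ, e2, β, β * α, β * α * γ} : Set Λ) := by simp
  have htop : ∀ x : Λ, x ∈ Submodule.span K
      ({e1, α, α ^ 2, α ^ 3, α ^ 4, γ, α * γ, e2, β, β * α, β * α * γ} : Set Λ) := by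
    have hB0 : b 0 ∈ Submodule.span K ({e1, α, α ^ 2, α ^ 3, α ^ 4, γ, α * γ, e2, β, β * α, β * α * γ} : Set Λ) := by
      rw [hb0]; exact Submodule.subset_span (by simp)
    have hB1 : b 1 ∈ Submodule.span K ({e1, α, α ^ 2, α ^ 3, α ^ 4, γ, α * γ, e2, β, β * α, β * α * γ} : Set Λ) := by
      rw [hb1]; exact Submodule.subset_span (by simp)
    have hB2 : b 2 ∈ Submodule.span K ({e1, α, α ^ 2, α ^ 3, α ^ 4, γ, α * γ, e2, β, β * α, β * α * γ} : Set Λ) := by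
      rw [hb2]; exact Submodule.subset_span (by simp)
    have hB3 : b 3 ∈ Submodule.span K ({e1, α, α ^ 2, α ^ 3, α ^ 4, γ, α * γ, e2, β, β * α, β * α * γ} : Set Λ) := by
      rw [hb3]; exact Submodule.subset_span (by simp)
    have hB4 : b 4 ∈ Submodule.span K ({e1, α, α ^ 2, α ^ 3, α ^ 4, γ, α * γ, e2, β, β * α, β * α * γ} : Set Λ) := by
      rw [hb4]; exact Submodule.subset_span (by simp)
    have hB5 : b 5 ∈ Submodule.span K ({e1, α, α ^ 2, α ^ 3, α ^ 4, γ, α * γ, e2, β, β * α, β * α * γ} : Set Λ) := by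
      rw [hb5]; exact Submodule.subset_span (by simp)
    have hB6 : b 6 ∈ Submodule.span K ({e1, α, α ^ 2, α ^ 3, α ^ 4, γ, α * γ, e2, β, β * α, β * α * γ} : Set Λ) := by
      rw [hb6]; exact Submodule.subset_span (by simp)
    have hB7 : b 7 ∈ Submodule.span K ({e1, α, α ^ 2, α ^ 3, α ^ 4, γ, α * γ, e2, β, β * α, β * α * γ} : Set Λ) := by
      rw [hb7]; exact Submodule.subset_span (by simp)
    have hB8 : b 8 ∈ Submodule.span K ({e1, α, α ^ 2, α ^ 3, α ^ 4, γ, α * γ, e2, β, β * α, β * α * γ} : Set Λ) := by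
      rw [hb8]; exact Submodule.subset_span (by simp)
    have hB9 : b 9 ∈ Submodule.span K ({e1, α, α ^ 2, α ^ 3, α ^ 4, γ, α * γ, e2, β, β * α, β * α * γ} : Set Λ) := by
      rw [hb9]; exact Submodule.subset_span (by simp)
    have hB10 : b 10 ∈ Submodule.span K ({e1, α, α ^ 2, α ^ 3, α ^ 4, γ, α * γ, e2, β, β * α, β * α * γ} : Set Λ) := by
      rw [hb10]; exact Submodule.subset_span (by simp)
    intro x
    have hx : x ∈ Submodule.span K (Set.range b) := by rw [b.span_eq]; exact Submodule.mem_top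
    have hle : Submodule.span K (Set.range b) ≤ Submodule.span K
        ({e1, α, α ^ 2, α ^ 3, α ^ 4, γ, α * γ, e2, β, β * α, β * α * γ} : Set Λ) := by
      rw [Submodule.span_le]
      rintro y ⟨i, rfl⟩
      fin_cases i
      exacts [hB0, hB1, hB2, hB3, hB4, hB5, hB6, hB7, hB8, hB9, hB10]
    exact hle hx
  -- every commutator lies in the target span
  have key : ∀ u v : Λ, u * v - v * u ∈
      Submodule.span K {γ, β, α * γ, β * α, γ * β, β * α * γ - α * γ * β} := by
    intro u v
    refine Submodule.span_induction
      (p := fun u _ => ∀ w, w ∈ Submodule.span K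
          ({e1, α, α ^ 2, α ^ 3, α ^ 4, γ, α * γ, e2, β, β * α, β * α * γ} : Set Λ) →
        u * w - w * u ∈
          Submodule.span K {γ, β, α * γ, β * α, γ * β, β * α * γ - α * γ * β})
      ?_ ?_ ?_ ?_ (htop u) v (htop v)
    · intro x hx w hw
      refine Submodule.span_induction
        (p := fun w _ => x * w - w * x ∈
          Submodule.span K {γ, β, α * γ, β * α, γ * β, β * α * γ - α * γ * β})
        ?_ ?_ ?_ ?_ hw
      · intro y hy
        simp only [Set.mem_insert_iff, Set.mem_singleton_iff] at hx hy
        rcases hx with h | h | h | h | h | h | h | h | h | h | h <;>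
        rcases hy with h2 | h2 | h2 | h2 | h2 | h2 | h2 | h2 | h2 | h2 | h2 <;>
          rw [h, h2] <;>
          simp only [pow_succ, pow_zero, pow_one, one_mul, mul_assoc,
            he1, he2, h12, h21, hα1, hα2, hβ1, hβ2, hγ1, hγ2, r2,
            e2α, αe2, γe1, e2γ, βe2, e1β, αβ, γα, γγ, ββ, γβ, βαα, ααγ, a5,
            he1', he2', h12', h21', hα1', hα2', hβ1', hβ2', hγ1', hγ2', r2',
            e2α', αe2', γe1', e2γ', βe2', e1β', αβ', γα', γγ', ββ', γβ', βαα',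
            zero_mul, mul_zero, sub_zero, zero_sub, sub_self] <;>
          first
            | exact zero_mem _
            | (apply Submodule.subset_span; simp; done)
            | (apply Submodule.neg_mem; apply Submodule.subset_span; simp; done)
            | (rw [← neg_sub (β * (α * γ)) (α * (α * (α * α)))]; apply Submodule.neg_mem; apply Submodule.subset_span; simp; done)
      · simp
      · intro y z _ _ hy hz
        have h : x * (y + z) - (y + z) * x = (x * y - y * x) + (x * z - z * x) := by
          noncomm_ring
        rw [h]; exact add_mem hy hz
      · intro c y _ hy
        have h : x * (c • y) - (c • y) * x = c • (x * y - y * x) := by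
          rw [mul_smul_comm, smul_mul_assoc, smul_sub]
        rw [h]; exact Submodule.smul_mem _ _ hy
    · intro w _; simp
    · intro x y _ _ hx hy w hw
      have h : (x + y) * w - w * (x + y) = (x * w - w * x) + (y * w - w * y) := by
        noncomm_ring
      rw [h]; exact add_mem (hx w hw) (hy w hw)
    · intro c x _ hx w hw
      have h : (c • x) * w - w * (c • x) = c • (x * w - w * x) := by
        rw [smul_mul_assoc, mul_smul_comm, smul_sub]
      rw [h]; exact Submodule.smul_mem _ _ (hx w hw)
  refine ⟨le_antisymm ?_ ?_, ?_⟩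
  · rw [Submodule.span_le]; rintro x ⟨u, v, rfl⟩; exact key u v
  · rw [Submodule.span_le]
    simp only [Set.insert_subset_iff, Set.singleton_subset_iff, SetLike.mem_coe]
    exact ⟨Submodule.subset_span ⟨e1, γ, by rw [hγ1, γe1, sub_zero]⟩,
      Submodule.subset_span ⟨e2, β, by rw [hβ1, βe2, sub_zero]⟩,
      Submodule.subset_span ⟨α, γ, by rw [γα, sub_zero]⟩,
      Submodule.subset_span ⟨β, α, by rw [αβ, sub_zero]⟩,
      Submodule.subset_span ⟨γ, β, by rw [r2, sub_zero]⟩,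
      Submodule.subset_span ⟨β, α * γ, by rw [← mul_assoc]⟩⟩
  · exact Submodule.subset_span ⟨γ, β, by rw [r2, sub_zero, r1]⟩
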